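/- Let 𝒞 be a symmetric monoidal category with a choice of substrate states Γ. For all objects H, K of 𝒞, the swap task σ : Rel (Γ(H ⊗ K)) (Γ(K ⊗ H)), defined by relating ρ ⋆ γ to γ ⋆ ρ for every ρ ∈ Γ(H) and γ ∈ Γ(K) (this is well defined since (ρ, γ) ↦ ρ ⋆ γ is a bijection Γ(H) × Γ(K) → Γ(H ⊗ K)), is possible; it is witnessed by the trivial constructor 𝟙, the attribute P = Γ(𝟙), and a task-inducing morphism built from the braiding β_{H,K} and unitors. -/

import Mathlib

open CategoryTheory MonoidalCategory

/-- The joint state `ρ ⋆ γ := (λ_𝟙)⁻¹ ≫ (ρ ⊗ γ) : 𝟙 ⟶ H ⊗ K` of two states. -/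
def pstate {C : Type*} [Category C] [MonoidalCategory C] {H K : C}
    (ρ : 𝟙_ C ⟶ H) (γ : 𝟙_ C ⟶ K) : 𝟙_ C ⟶ H ⊗ K :=
  (λ_ (𝟙_ C)).inv ≫ (ρ ⊗ₘ γ)

/-- A choice of substrate states: a family `Γ` of sets of states, containing exactly
the identity on the unit object, and such that `(ρ, γ) ↦ ρ ⋆ γ` restricts to a
bijection from `Γ H × Γ K` onto `Γ (H ⊗ K)`. -/
structure SubstrateStates (C : Type*) [Category C] [MonoidalCategory C] where
  Γ : ∀ H : C, Set (𝟙_ C ⟶ H)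
  unit_eq : Γ (𝟙_ C) = {𝟙 (𝟙_ C)}
  star_bijOn : ∀ H K : C,
    Set.BijOn (fun p : (𝟙_ C ⟶ H) × (𝟙_ C ⟶ K) => pstate p.1 p.2)
      (Γ H ×ˢ Γ K) (Γ (H ⊗ K))

/-- A morphism `f : H ⟶ K` is task-inducing if it maps states in `Γ H` to states
in `Γ K`. -/
def TaskInducing {C : Type*} [Category C] [MonoidalCategory C]
    (G : SubstrateStates C) {H K : C} (f : H ⟶ K) : Prop :=
  ∀ ρ ∈ G.Γ H, ρ ≫ f ∈ G.Γ K

/-- The task `A : Rel (Γ H) (Γ K)` is possible, witnessed by the constructor `Con`: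
there are an attribute `P ⊆ Γ Con` and a task-inducing process
`f : H ⊗ Con ⟶ K ⊗ Con` such that (1) `A` is obtained from the induced task by
pre-conditioning on `P` and discarding the constructor output, and (2) the attribute
`P` is preserved by the induced task. -/
def PossibleWith {C : Type*} [Category C] [MonoidalCategory C]
    (G : SubstrateStates C) {H K : C} (Con : C)
    (A : Set ((𝟙_ C ⟶ H) × (𝟙_ C ⟶ K))) : Prop :=
  ∃ P ⊆ G.Γ Con, ∃ f : H ⊗ Con ⟶ K ⊗ Con, TaskInducing G f ∧
    (∀ ρ ∈ G.Γ H, ∀ ρ' ∈ G.Γ K,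
      ((ρ, ρ') ∈ A ↔ ∃ γ ∈ P, ∃ γ' ∈ G.Γ Con, pstate ρ γ ≫ f = pstate ρ' γ')) ∧
    (∀ ρ ∈ G.Γ H, ∀ γ ∈ P, ∀ ρ' ∈ G.Γ K, ∀ γ' ∈ G.Γ Con,
      pstate ρ γ ≫ f = pstate ρ' γ' → γ' ∈ P)

lemma pstate_id {C : Type*} [Category C] [MonoidalCategory C] {H : C}
    (ρ : 𝟙_ C ⟶ H) : pstate ρ (𝟙 (𝟙_ C)) = ρ ≫ (ρ_ H).inv := by
  simp [pstate, MonoidalCategory.tensorHom_def, ← MonoidalCategory.unitors_equal]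

lemma pstate_braid {C : Type*} [Category C] [MonoidalCategory C] [SymmetricCategory C]
    {H K : C} (ρ : 𝟙_ C ⟶ H) (γ : 𝟙_ C ⟶ K) :
    pstate ρ γ ≫ (β_ H K).hom = pstate γ ρ := by
  rw [pstate, Category.assoc, BraidedCategory.braiding_naturality]
  simp [pstate, ← MonoidalCategory.unitors_equal]

/-- The swap task, relating `ρ ⋆ γ` to `γ ⋆ ρ` for all `ρ ∈ Γ H`, `γ ∈ Γ K`, is
possible, witnessed by the unit object `𝟙` as trivial constructor. -/
theorem stmt10 {C : Type*} [Category C] [MonoidalCategory C] [SymmetricCategory C]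
    (G : SubstrateStates C) (H K : C) :
    PossibleWith G (𝟙_ C)
      {p : (𝟙_ C ⟶ H ⊗ K) × (𝟙_ C ⟶ K ⊗ H) |
        ∃ ρ ∈ G.Γ H, ∃ γ ∈ G.Γ K, p.1 = pstate ρ γ ∧ p.2 = pstate γ ρ} := by
  set f : (H ⊗ K) ⊗ 𝟙_ C ⟶ (K ⊗ H) ⊗ 𝟙_ C :=
    (ρ_ (H ⊗ K)).hom ≫ (β_ H K).hom ≫ (ρ_ (K ⊗ H)).inv with hf
  have key : ∀ τ : 𝟙_ C ⟶ H ⊗ K,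
      pstate τ (𝟙 (𝟙_ C)) ≫ f = pstate (τ ≫ (β_ H K).hom) (𝟙 (𝟙_ C)) := by
    intro τ
    rw [pstate_id, pstate_id, hf]
    simp
  have hunit : ∀ γ ∈ G.Γ (𝟙_ C), γ = 𝟙 (𝟙_ C) := by
    intro γ hγ; rw [G.unit_eq] at hγ; exact hγ
  refine ⟨G.Γ (𝟙_ C), le_refl _, f, ?_, ?_, ?_⟩
  · -- task inducing
    intro τ hτ
    obtain ⟨⟨σ, γ⟩, ⟨hσ, hγ⟩, hτeq⟩ := (G.star_bijOn (H ⊗ K) (𝟙_ C)).surjOn hτ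
    obtain ⟨⟨ρ₀, γ₀⟩, ⟨hρ₀, hγ₀⟩, hσeq⟩ := (G.star_bijOn H K).surjOn hσ
    have hγ1 := hunit γ hγ
    simp only at hτeq hσeq
    subst hγ1
    rw [← hτeq, key]
    have hswap : σ ≫ (β_ H K).hom ∈ G.Γ (K ⊗ H) := by
      rw [← hσeq, pstate_braid]
      exact (G.star_bijOn K H).mapsTo (Set.mk_mem_prod hγ₀ hρ₀)
    have : 𝟙 (𝟙_ C) ∈ G.Γ (𝟙_ C) := by rw [G.unit_eq]; rfl
    exact (G.star_bijOn (K ⊗ H) (𝟙_ C)).mapsTo (Set.mk_mem_prod hswap this)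
  · -- characterization
    intro τ hτ τ' hτ'
    constructor
    · rintro ⟨ρ, hρ, γ, hγ, h1, h2⟩
      have h1unit : 𝟙 (𝟙_ C) ∈ G.Γ (𝟙_ C) := by rw [G.unit_eq]; rfl
      refine ⟨𝟙 (𝟙_ C), h1unit, 𝟙 (𝟙_ C), h1unit, ?_⟩
      simp only at h1 h2
      rw [key, h1, h2, pstate_braid]
    · rintro ⟨γ, hγ, γ', hγ', heq⟩
      have hγ1 := hunit γ hγ
      have hγ'1 := hunit γ' hγ'
      subst hγ1; subst hγ'1
      rw [key, pstate_id, pstate_id] at heq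
      have hττ' : τ ≫ (β_ H K).hom = τ' := by
        have := heq =≫ (ρ_ (K ⊗ H)).hom
        simpa using this
      obtain ⟨⟨ρ₀, γ₀⟩, ⟨hρ₀, hγ₀⟩, hτeq⟩ := (G.star_bijOn H K).surjOn hτ
      simp only at hτeq
      refine ⟨ρ₀, hρ₀, γ₀, hγ₀, hτeq.symm, ?_⟩
      rw [← hττ', ← hτeq, pstate_braid]
  · -- attribute preserved
    intro _ _ _ _ _ _ γ' hγ' _
    exact hγ'
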